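/- Let G be a pseudoregular groupoid and e an idempotent of the inverse monoid V(G). Define star_e^⋈(G) = {e ▷ α ◁ e : α ∈ G, αd = e} and π_e^⋈(G) = {α ∈ star_e^⋈(G) : αr = e}. Then the operation ∗ and the groupoid composition ∘ coincide on π_e^⋈(G), and π_e^⋈(G) is a group under this operation. -/
import Mathlib


/-- An inverse monoid. -/
class InverseMonoid (M : Type*) extends Monoid M, Inv M where
  mul_inv_mul : ∀ a : M, a * a⁻¹ * a = a
  inv_mul_inv : ∀ a : M, a⁻¹ * a * a⁻¹ = a⁻¹
  idem_comm : ∀ e f : M, e * e = e → f * f = f → e * f = f * e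

/-- A semiregular groupoid: a groupoid (given algebraically by its set of arrows `G`
over a vertex monoid `V`, with totalised composition `comp` whose axioms are guarded by
the composability condition `r α = d β`) together with left and right actions of the
vertex monoid `V` on arrows, satisfying the axioms of Definition 2.1. -/
structure SemiregularGroupoid (V : Type*) [Monoid V] (G : Type*) where
  d : G → V
  r : G → V
  comp : G → G → G
  id : V → G
  inv : G → G
  d_id : ∀ v, d (id v) = v
  r_id : ∀ v, r (id v) = v
  d_comp : ∀ α β, r α = d β → d (comp α β) = d α
  r_comp : ∀ α β, r α = d β → r (comp α β) = r β
  comp_assoc : ∀ α β γ, r α = d β → r β = d γ →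
    comp (comp α β) γ = comp α (comp β γ)
  id_comp : ∀ α, comp (id (d α)) α = α
  comp_id : ∀ α, comp α (id (r α)) = α
  d_inv : ∀ α, d (inv α) = r α
  r_inv : ∀ α, r (inv α) = d α
  comp_inv : ∀ α, comp α (inv α) = id (d α)
  inv_comp : ∀ α, comp (inv α) α = id (r α)
  actL : V → G → G
  actR : G → V → G
  actL_mul : ∀ x y α, actL (x * y) α = actL x (actL y α)
  actR_mul : ∀ α x y, actR α (x * y) = actR (actR α x) y
  actL_actR : ∀ x α y, actR (actL x α) y = actL x (actR α y)
  one_actL : ∀ α, actL 1 α = α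
  actR_one : ∀ α, actR α 1 = α
  d_actL : ∀ x α, d (actL x α) = x * d α
  d_actR : ∀ α x, d (actR α x) = d α * x
  r_actL : ∀ x α, r (actL x α) = x * r α
  r_actR : ∀ α x, r (actR α x) = r α * x
  actL_comp : ∀ x α β, r α = d β → actL x (comp α β) = comp (actL x α) (actL x β)
  actR_comp : ∀ α β x, r α = d β → actR (comp α β) x = comp (actR α x) (actR β x)
  actL_id : ∀ x y, actL x (id y) = id (x * y)
  actR_id : ∀ x y, actR (id x) y = id (x * y)

/-- The operation `α ∗ β = (α ◁ βd) ∘ (αr ▷ β)`. -/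
def SemiregularGroupoid.star {V : Type*} [Monoid V] {G : Type*}
    (S : SemiregularGroupoid V G) (α β : G) : G :=
  S.comp (S.actR α (S.d β)) (S.actL (S.r α) β)

/-- The operation `α ⊛ β = (αd ▷ β) ∘ (α ◁ βr)`. -/
def SemiregularGroupoid.ostar {V : Type*} [Monoid V] {G : Type*}
    (S : SemiregularGroupoid V G) (α β : G) : G :=
  S.comp (S.actL (S.d α) β) (S.actR α (S.r β))

/-- `star_e^⋈(G) = {e ▷ α ◁ e : αd = e}`. -/
def bowtieStar {V : Type*} [InverseMonoid V] {G : Type*}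
    (S : SemiregularGroupoid V G) (e : V) : Set G :=
  {γ | ∃ α : G, S.d α = e ∧ γ = S.actL e (S.actR α e)}

/-- `π_e^⋈(G) = {α ∈ star_e^⋈(G) : αr = e}`. -/
def bowtiePi {V : Type*} [InverseMonoid V] {G : Type*}
    (S : SemiregularGroupoid V G) (e : V) : Set G :=
  {γ ∈ bowtieStar S e | S.r γ = e}


section Helpers
variable {V : Type*} [InverseMonoid V] {G : Type*} (S : SemiregularGroupoid V G) (e : V)

lemma pi_r {γ : G} (h : γ ∈ bowtiePi S e) : S.r γ = e := h.2

lemma pi_d (he : e * e = e) {γ : G} (h : γ ∈ bowtiePi S e) : S.d γ = e := by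
  obtain ⟨⟨α, hα, rfl⟩, -⟩ := h
  rw [S.d_actL, S.d_actR, hα, he, he]

lemma pi_fix (he : e * e = e) {γ : G} (h : γ ∈ bowtiePi S e) : S.actL e (S.actR γ e) = γ := by
  obtain ⟨⟨α, hα, rfl⟩, -⟩ := h
  rw [S.actL_actR, ← S.actL_mul, he, ← S.actR_mul, he]

lemma pi_fixL (he : e * e = e) {γ : G} (h : γ ∈ bowtiePi S e) : S.actL e γ = γ := by
  conv_lhs => rw [← pi_fix S e he h, ← S.actL_mul, he]
  exact pi_fix S e he h

lemma pi_fixR (he : e * e = e) {γ : G} (h : γ ∈ bowtiePi S e) : S.actR γ e = γ := by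
  conv_lhs => rw [← pi_fix S e he h, S.actL_actR, ← S.actR_mul, he]
  exact pi_fix S e he h

lemma star_eq_comp (he : e * e = e) {γ δ : G} (hγ : γ ∈ bowtiePi S e) (hδ : δ ∈ bowtiePi S e) :
    S.star γ δ = S.comp γ δ := by
  unfold SemiregularGroupoid.star
  rw [pi_d S e he hδ, pi_r S e hγ, pi_fixR S e he hγ, pi_fixL S e he hδ]

lemma pi_comp_mem (he : e * e = e) {γ δ : G} (hγ : γ ∈ bowtiePi S e) (hδ : δ ∈ bowtiePi S e) :
    S.comp γ δ ∈ bowtiePi S e := by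
  have hrd : S.r γ = S.d δ := by rw [pi_r S e hγ, pi_d S e he hδ]
  refine ⟨⟨S.comp γ δ, ?_, ?_⟩, ?_⟩
  · rw [S.d_comp γ δ hrd, pi_d S e he hγ]
  · rw [S.actR_comp γ δ e hrd, S.actL_comp e _ _
      (by rw [S.r_actR, S.d_actR, pi_r S e hγ, pi_d S e he hδ]),
      pi_fix S e he hγ, pi_fix S e he hδ]
  · rw [S.r_comp γ δ hrd, pi_r S e hδ]

lemma pi_star_mem (he : e * e = e) {γ δ : G} (hγ : γ ∈ bowtiePi S e) (hδ : δ ∈ bowtiePi S e) :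
    S.star γ δ ∈ bowtiePi S e := by
  rw [star_eq_comp S e he hγ hδ]; exact pi_comp_mem S e he hγ hδ

lemma pi_id_mem (he : e * e = e) : S.id e ∈ bowtiePi S e := by
  refine ⟨⟨S.id e, S.d_id e, ?_⟩, S.r_id e⟩
  rw [S.actR_id, S.actL_id, he, he]

lemma key_right (he : e * e = e) {γ : G} (hγ : γ ∈ bowtiePi S e) (β : G)
    (hβ : S.d β = e) :
    S.comp γ (S.actL e (S.actR β e)) = S.actL e (S.actR (S.comp γ β) e) := by
  rw [S.actR_comp γ β e (by rw [pi_r S e hγ, hβ]),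
    S.actL_comp e _ _ (by rw [S.r_actR, S.d_actR, pi_r S e hγ, hβ]),
    pi_fix S e he hγ]

lemma key_left (he : e * e = e) {γ : G} (hγ : γ ∈ bowtiePi S e) (β : G)
    (hβ : S.r β = e) :
    S.comp (S.actL e (S.actR β e)) γ = S.actL e (S.actR (S.comp β γ) e) := by
  rw [S.actR_comp β γ e (by rw [pi_d S e he hγ, hβ]),
    S.actL_comp e _ _ (by rw [S.r_actR, S.d_actR, pi_d S e he hγ, hβ]),
    pi_fix S e he hγ]

end Helpers

/-- in a pseudoregular groupoid, for an idempotent `e` of the inverse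
monoid `V(G)`, the operations `∗` and `∘` coincide on `π_e^⋈(G)`, and `π_e^⋈(G)` is a
group under this operation (with identity `1_e`). -/
theorem stmt9 {V : Type*} [InverseMonoid V] {G : Type*}
    (S : SemiregularGroupoid V G) (e : V) (he : e * e = e) :
    (∀ γ ∈ bowtiePi S e, ∀ δ ∈ bowtiePi S e, S.star γ δ = S.comp γ δ) ∧
    (∀ γ ∈ bowtiePi S e, ∀ δ ∈ bowtiePi S e, S.star γ δ ∈ bowtiePi S e) ∧
    (∀ γ ∈ bowtiePi S e, ∀ δ ∈ bowtiePi S e, ∀ η ∈ bowtiePi S e,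
      S.star (S.star γ δ) η = S.star γ (S.star δ η)) ∧
    (S.id e ∈ bowtiePi S e) ∧
    (∀ γ ∈ bowtiePi S e, S.star (S.id e) γ = γ ∧ S.star γ (S.id e) = γ) ∧
    (∀ γ ∈ bowtiePi S e, ∃ δ ∈ bowtiePi S e,
      S.star γ δ = S.id e ∧ S.star δ γ = S.id e) := by
  refine ⟨fun γ hγ δ hδ => star_eq_comp S e he hγ hδ,
    fun γ hγ δ hδ => pi_star_mem S e he hγ hδ, ?_, pi_id_mem S e he, ?_, ?_⟩
  · intro γ hγ δ hδ η hη
    rw [star_eq_comp S e he hγ hδ, star_eq_comp S e he hδ hη,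
      star_eq_comp S e he (pi_comp_mem S e he hγ hδ) hη,
      star_eq_comp S e he hγ (pi_comp_mem S e he hδ hη),
      S.comp_assoc γ δ η (by rw [pi_r S e hγ, pi_d S e he hδ])
        (by rw [pi_r S e hδ, pi_d S e he hη])]
  · intro γ hγ
    constructor
    · rw [star_eq_comp S e he (pi_id_mem S e he) hγ,
        show S.id e = S.id (S.d γ) from by rw [pi_d S e he hγ]]
      exact S.id_comp γ
    · rw [star_eq_comp S e he hγ (pi_id_mem S e he),
        show S.id e = S.id (S.r γ) from by rw [pi_r S e hγ]]
      exact S.comp_id γ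
  · intro γ hγ
    refine ⟨S.actL e (S.actR (S.inv γ) e), ⟨⟨S.inv γ, by rw [S.d_inv, pi_r S e hγ], rfl⟩, ?_⟩,
      ?_, ?_⟩
    · rw [S.r_actL, S.r_actR, S.r_inv, pi_d S e he hγ, he, he]
    · have hδ : S.actL e (S.actR (S.inv γ) e) ∈ bowtiePi S e :=
        ⟨⟨S.inv γ, by rw [S.d_inv, pi_r S e hγ], rfl⟩,
          by rw [S.r_actL, S.r_actR, S.r_inv, pi_d S e he hγ, he, he]⟩
      rw [star_eq_comp S e he hγ hδ,
        key_right S e he hγ (S.inv γ) (by rw [S.d_inv, pi_r S e hγ]),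
        S.comp_inv, pi_d S e he hγ, S.actR_id, S.actL_id, he, he]
    · have hδ : S.actL e (S.actR (S.inv γ) e) ∈ bowtiePi S e :=
        ⟨⟨S.inv γ, by rw [S.d_inv, pi_r S e hγ], rfl⟩,
          by rw [S.r_actL, S.r_actR, S.r_inv, pi_d S e he hγ, he, he]⟩
      rw [star_eq_comp S e he hδ hγ,
        key_left S e he hγ (S.inv γ) (by rw [S.r_inv, pi_d S e he hγ]),
        S.inv_comp, pi_r S e hγ, S.actR_id, S.actL_id, he, he]
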